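/- For d ≥ 2, M_d^q(z) ≥ M_d^c(z) for all z ∈ [1/d, 1], where M_d^q(z) = 1 - ((d-1)/d)(√z - √((1-z)/(d-1)))² and M_d^c(z) = (d+1)/d - z, with equality at z = 1/d and z = 1. -/

import Mathlib

open Real

theorem quantum_tradeoff_ge_classical (d : ℕ) (hd : 2 ≤ d) :
    let Mq : ℝ → ℝ := fun z =>
      1 - (((d : ℝ) - 1) / d) * (Real.sqrt z - Real.sqrt ((1 - z) / ((d : ℝ) - 1))) ^ 2
    let Mc : ℝ → ℝ := fun z => ((d : ℝ) + 1) / d - z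
    (∀ z ∈ Set.Icc (1 / (d : ℝ)) 1, Mc z ≤ Mq z) ∧
    Mq (1 / (d : ℝ)) = Mc (1 / (d : ℝ)) ∧ Mq 1 = Mc 1 := by
  intro Mq Mc
  have hD : (2:ℝ) ≤ (d:ℝ) := by exact_mod_cast hd
  have hD0 : (0:ℝ) < (d:ℝ) := by linarith
  have hD1 : (0:ℝ) < (d:ℝ) - 1 := by linarith
  have hne : (d:ℝ) ≠ 0 := ne_of_gt hD0
  have hne1 : (d:ℝ) - 1 ≠ 0 := ne_of_gt hD1
  refine ⟨?_, ?_, ?_⟩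
  · intro z hz
    obtain ⟨hz1, hz2⟩ := hz
    have hz0 : 0 ≤ z := le_trans (by positivity) hz1
    have h1z : 0 ≤ 1 - z := by linarith
    have hdz : 1 ≤ (d:ℝ) * z := by
      rw [div_le_iff₀ hD0] at hz1; linarith
    set a := Real.sqrt z with ha_def
    set b := Real.sqrt ((1-z)/((d:ℝ)-1)) with hb_def
    have ha : a^2 = z := Real.sq_sqrt hz0
    have hb : b^2 = (1-z)/((d:ℝ)-1) := Real.sq_sqrt (by positivity)
    have key : (1 - z) ≤ ((d:ℝ)-1) * (a * b) := by
      have hab : a * b = Real.sqrt (z * ((1-z)/((d:ℝ)-1))) := (Real.sqrt_mul hz0 _).symm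
      have h2 : ((d:ℝ)-1) * (a*b) = Real.sqrt (((d:ℝ)-1)^2 * (z * ((1-z)/((d:ℝ)-1)))) := by
        rw [Real.sqrt_mul (sq_nonneg _), Real.sqrt_sq hD1.le, ← hab]
      rw [h2]
      have heq : ((d:ℝ)-1)^2 * (z * ((1-z)/((d:ℝ)-1))) = ((d:ℝ)-1) * z * (1-z) := by
        field_simp
      rw [heq]
      calc 1 - z = Real.sqrt ((1-z)^2) := (Real.sqrt_sq h1z).symm
        _ ≤ _ := Real.sqrt_le_sqrt (by nlinarith)
    have expand : (a - b)^2 = z + (1-z)/((d:ℝ)-1) - 2*(a*b) := by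
      rw [sub_sq, ha, hb]; ring
    have hid : (1 - (((d : ℝ) - 1) / d) * (a - b) ^ 2) - (((d : ℝ) + 1) / d - z)
          = (2/(d:ℝ)) * (((d:ℝ)-1)*(a*b) - (1-z)) := by
      rw [expand]; field_simp; ring
    have h3 : 0 ≤ (2/(d:ℝ)) * (((d:ℝ)-1)*(a*b) - (1-z)) := by
      apply mul_nonneg (by positivity); linarith
    show Mc z ≤ Mq z
    simp only [Mq, Mc]
    linarith [hid, h3]
  · show (1 - (((d : ℝ) - 1) / d) * (Real.sqrt (1/(d:ℝ)) - Real.sqrt ((1 - 1/(d:ℝ)) / ((d : ℝ) - 1))) ^ 2)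
        = ((d : ℝ) + 1) / d - 1/(d:ℝ)
    have h1 : (1 - 1/(d:ℝ)) / ((d : ℝ) - 1) = 1/(d:ℝ) := by field_simp
    rw [h1, sub_self]
    field_simp
    ring
  · show (1 - (((d : ℝ) - 1) / d) * (Real.sqrt 1 - Real.sqrt ((1 - 1) / ((d : ℝ) - 1))) ^ 2)
        = ((d : ℝ) + 1) / d - 1
    rw [Real.sqrt_one, sub_self, zero_div, Real.sqrt_zero]
    field_simp
    ring
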